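/- Let k be a field of prime characteristic p, let n be an integer with n > 1 that is not divisible by p, define φ(e) := n·p^e − dim_k (k[X,Y]/(X^{p^e}, Y^{p^e}, X^n − Y^n)) for each nonnegative integer e, and let ω be the multiplicative order of p modulo n. Then φ(e + ω) = φ(e) for every nonnegative integer e; that is, φ is immediately periodic with period dividing ω. -/

import Mathlib

open MvPolynomial

namespace HKaux

variable {k : Type*} [Field k]

noncomputable def mk2 (a b : ℕ) : Fin 2 →₀ ℕ := Finsupp.single 0 a + Finsupp.single 1 b

@[simp] lemma mk2_apply0 (a b : ℕ) : mk2 a b 0 = a := by simp [mk2, Finsupp.single_apply]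
@[simp] lemma mk2_apply1 (a b : ℕ) : mk2 a b 1 = b := by simp [mk2, Finsupp.single_apply]

lemma mk2_add (a b a' b' : ℕ) : mk2 a b + mk2 a' b' = mk2 (a + a') (b + b') := by
  ext i; fin_cases i <;> simp [mk2, Finsupp.single_apply]

lemma eq_mk2 (d : Fin 2 →₀ ℕ) : d = mk2 (d 0) (d 1) := by
  ext i; fin_cases i <;> simp

lemma add_single0 (d : Fin 2 →₀ ℕ) (m : ℕ) :
    d + Finsupp.single 0 m = mk2 (d 0 + m) (d 1) := by
  ext i; fin_cases i <;> simp [mk2, Finsupp.single_apply]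

lemma add_single1 (d : Fin 2 →₀ ℕ) (m : ℕ) :
    d + Finsupp.single 1 m = mk2 (d 0) (d 1 + m) := by
  ext i; fin_cases i <;> simp [mk2, Finsupp.single_apply]

lemma single0_eq_mk2 (a : ℕ) : Finsupp.single (0 : Fin 2) a = mk2 a 0 := by
  simp [mk2]

lemma single1_eq_mk2 (b : ℕ) : Finsupp.single (1 : Fin 2) b = mk2 0 b := by
  simp [mk2]

lemma monomial_mk2 (a b : ℕ) :
    (monomial (mk2 a b) (1 : k)) = X 0 ^ a * X 1 ^ b := by
  rw [X_pow_eq_monomial, X_pow_eq_monomial, monomial_mul, mul_one]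
  rfl

def good (n q r cn : ℕ) (x : ℕ × ℕ) : Prop :=
  (x.2 < r ∧ x.1 < q) ∨ (r ≤ x.2 ∧ x.2 < n ∧ x.1 < cn)

instance (n q r cn : ℕ) (x : ℕ × ℕ) : Decidable (good n q r cn x) := by
  unfold good; infer_instance

def red (n : ℕ) (a b : ℕ) : ℕ × ℕ := (a + n * (b / n), b % n)

noncomputable def tgt (n q r cn : ℕ) (d : Fin 2 →₀ ℕ) : (ℕ × ℕ) →₀ k :=
  if good n q r cn (red n (d 0) (d 1)) then Finsupp.single (red n (d 0) (d 1)) 1 else 0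

variable (n q r cn : ℕ)

lemma tgt_mk2 (a b : ℕ) : (tgt n q r cn (mk2 a b) : (ℕ×ℕ) →₀ k) =
    if good n q r cn (red n a b) then Finsupp.single (red n a b) 1 else 0 := by
  simp [tgt]

lemma tgt_mk2_lt (a b : ℕ) (hb : b < n) : (tgt n q r cn (mk2 a b) : (ℕ×ℕ) →₀ k) =
    if good n q r cn (a, b) then Finsupp.single (a, b) 1 else 0 := by
  rw [tgt_mk2]
  have : red n a b = (a, b) := by
    simp [red, Nat.div_eq_of_lt hb, Nat.mod_eq_of_lt hb]
  rw [this]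

lemma tgt_step (hn : 0 < n) (a b : ℕ) :
    (tgt n q r cn (mk2 a (b + n)) : (ℕ×ℕ) →₀ k) = tgt n q r cn (mk2 (a + n) b) := by
  rw [tgt_mk2, tgt_mk2]
  have h1 : red n a (b + n) = red n (a + n) b := by
    simp [red, Nat.add_div_right _ hn, Nat.add_mod_right, Nat.mul_add, Nat.mul_succ]
    ring
  rw [h1]

lemma not_good_a (hq : q = cn + r) (a b : ℕ) :
    ¬ good n q r cn (a + q + n * (b / n), b % n) := by
  simp only [good]; omega

lemma not_good_b (hn : 0 < n) (hr : r = q % n) (hcn : cn = n * (q / n))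
    (a b : ℕ) : ¬ good n q r cn (a + n * ((b + q) / n), (b + q) % n) := by
  have hA : q / n ≤ (b + q) / n := Nat.div_le_div_right (Nat.le_add_left q b)
  have hDM : n * ((b + q) / n) + (b + q) % n = b + q := Nat.div_add_mod (b+q) n
  have hq' : n * (q / n) + q % n = q := Nat.div_add_mod q n
  have hB : (b + q) % n < n := Nat.mod_lt _ hn
  have hrn : r < n := hr ▸ Nat.mod_lt _ hn
  have hNC : cn + r = q := by rw [hcn, hr]; exact hq'
  rcases eq_or_lt_of_le hA with h | h
  · have hna : n * ((b + q) / n) = cn := by rw [← h, hcn]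
    simp only [good]
    omega
  · have h2 : n * (q / n + 1) ≤ n * ((b + q) / n) := Nat.mul_le_mul_left n (by omega)
    rw [Nat.mul_add, Nat.mul_one, ← hcn] at h2
    simp only [good]
    omega

section L

variable (k)

/-- the normal form linear map -/
noncomputable def L : MvPolynomial (Fin 2) k →ₗ[k] ((ℕ × ℕ) →₀ k) :=
  (basisMonomials (Fin 2) k).constr k (tgt n q (q % n) (n * (q / n)))

variable {k}

lemma L_monomial (d : Fin 2 →₀ ℕ) (c : k) :
    L k n q (monomial d c) = c • tgt n q (q % n) (n * (q / n)) d := by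
  have h1 : monomial d c = c • monomial d (1 : k) := by
    rw [smul_monomial, smul_eq_mul, mul_one]
  have h2 : (monomial d (1 : k)) = basisMonomials (Fin 2) k d := by
    rw [coe_basisMonomials]
  rw [h1, map_smul]
  congr 1
  rw [h2, L]
  exact Module.Basis.constr_basis _ _ _ _

lemma L_mono_mk2 (a b : ℕ) :
    L k n q (monomial (mk2 a b) 1) = tgt n q (q % n) (n * (q / n)) (mk2 a b) := by
  rw [L_monomial, one_smul]

lemma L_mul_X0 (d : Fin 2 →₀ ℕ) :
    L k n q (monomial d 1 * X 0 ^ q) = 0 := by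
  rw [X_pow_eq_monomial, monomial_mul, mul_one, add_single0, L_monomial, tgt_mk2]
  rw [if_neg, smul_zero]
  exact not_good_a n q (q % n) (n * (q / n)) (Nat.div_add_mod q n).symm (d 0) (d 1)

lemma L_mul_X1 (hn : 0 < n) (d : Fin 2 →₀ ℕ) :
    L k n q (monomial d 1 * X 1 ^ q) = 0 := by
  rw [X_pow_eq_monomial, monomial_mul, mul_one, add_single1, L_monomial, tgt_mk2]
  rw [if_neg, smul_zero]
  exact not_good_b n q (q % n) (n * (q / n)) hn rfl rfl (d 0 + 0) (d 1)

lemma L_mul_f (hn : 0 < n) (d : Fin 2 →₀ ℕ) :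
    L k n q (monomial d 1 * (X 0 ^ n - X 1 ^ n)) = 0 := by
  rw [mul_sub, map_sub, X_pow_eq_monomial, X_pow_eq_monomial, monomial_mul, monomial_mul]
  simp only [mul_one]
  rw [add_single0, add_single1, L_mono_mk2, L_mono_mk2, tgt_step n q _ _ hn, sub_self]

lemma L_mul (g : MvPolynomial (Fin 2) k)
    (hg : ∀ d : Fin 2 →₀ ℕ, L k n q (monomial d 1 * g) = 0)
    (u : MvPolynomial (Fin 2) k) : L k n q (u * g) = 0 := by
  induction u using MvPolynomial.induction_on' with
  | monomial d c =>
    have : monomial d c = c • monomial d (1 : k) := by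
      rw [smul_monomial, smul_eq_mul, mul_one]
    rw [this, smul_mul_assoc, map_smul, hg d, smul_zero]
  | add p p' hp hp' => rw [add_mul, map_add, hp, hp', add_zero]

/-- the ideal -/
noncomputable def I (k : Type*) [Field k] (n q : ℕ) : Ideal (MvPolynomial (Fin 2) k) :=
  Ideal.span {X 0 ^ q, X 1 ^ q, X 0 ^ n - X 1 ^ n}

lemma L_ideal (hn : 0 < n) (z : MvPolynomial (Fin 2) k) (hz : z ∈ I k n q) :
    L k n q z = 0 := by
  rw [I, show ({X 0 ^ q, X 1 ^ q, X 0 ^ n - X 1 ^ n} : Set (MvPolynomial (Fin 2) k)) =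
    insert (X 0 ^ q) (insert (X 1 ^ q) {X 0 ^ n - X 1 ^ n}) from rfl] at hz
  rw [Ideal.mem_span_insert] at hz
  obtain ⟨u, z', hz', rfl⟩ := hz
  rw [Ideal.mem_span_insert] at hz'
  obtain ⟨v, z'', hz'', rfl⟩ := hz'
  rw [Ideal.mem_span_singleton] at hz''
  obtain ⟨w, rfl⟩ := hz''
  rw [map_add, map_add, mul_comm _ w]
  rw [L_mul n q _ (L_mul_X0 n q) u, L_mul n q _ (L_mul_X1 n q hn) v,
    L_mul n q _ (L_mul_f n q hn) w, add_zero, add_zero]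

end L

section quot

variable (k)

/-- the good region as a finset -/
def Gs (n q : ℕ) : Finset (ℕ × ℕ) :=
  (Finset.range q ×ˢ Finset.range (q % n)) ∪
    (Finset.range (n * (q / n)) ×ˢ Finset.Ico (q % n) n)

lemma mem_Gs {n q : ℕ} {x : ℕ × ℕ} : x ∈ Gs n q ↔ good n q (q % n) (n * (q / n)) x := by
  simp only [Gs, Finset.mem_union, Finset.mem_product, Finset.mem_range, Finset.mem_Ico, good]
  tauto

lemma card_Gs {n q : ℕ} : (Gs n q).card = q * (q % n) + n * (q / n) * (n - q % n) := by
  rw [Gs, Finset.card_union_of_disjoint, Finset.card_product, Finset.card_product,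
    Finset.card_range, Finset.card_range, Finset.card_range, Nat.card_Ico]
  · rw [Finset.disjoint_left]
    intro x hx hx'
    simp only [Finset.mem_product, Finset.mem_range, Finset.mem_Ico] at hx hx'
    omega

noncomputable abbrev Q (k : Type*) [Field k] (n q : ℕ) :=
  MvPolynomial (Fin 2) k ⧸ I k n q

noncomputable def pi : MvPolynomial (Fin 2) k →ₐ[k] Q k n q :=
  Ideal.Quotient.mkₐ k (I k n q)

/-- the candidate basis family -/
noncomputable def v (g : Gs n q) : Q k n q :=
  pi k n q (monomial (mk2 g.1.1 g.1.2) 1)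

/-- `L` descends to the quotient -/
noncomputable def L' (hn : 0 < n) : Q k n q →ₗ[k] ((ℕ × ℕ) →₀ k) :=
  (Submodule.liftQ ((I k n q).restrictScalars k) (L k n q)
      (fun z hz => L_ideal n q hn z hz)) ∘ₗ
    (Submodule.Quotient.restrictScalarsEquiv k (I k n q)).symm.toLinearMap

lemma L'_pi (hn : 0 < n) (z : MvPolynomial (Fin 2) k) : L' k n q hn (pi k n q z) = L k n q z := by
  have h1 : (pi k n q z : Q k n q) = Submodule.Quotient.mk z := rfl
  rw [L', LinearMap.comp_apply, h1, LinearEquiv.coe_toLinearMap,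
    Submodule.Quotient.restrictScalarsEquiv_symm_mk]
  exact Submodule.liftQ_apply _ _ _

lemma v_indep (hn : 0 < n) : LinearIndependent k (v k n q) := by
  have h : LinearIndependent k (fun g : Gs n q => (Finsupp.single (g : ℕ × ℕ) 1 : (ℕ×ℕ) →₀ k)) := by
    exact (Finsupp.basisSingleOne.linearIndependent).comp _ Subtype.coe_injective
  apply LinearIndependent.of_comp (L' k n q hn)
  convert h using 1
  funext g
  have hgood : good n q (q % n) (n * (q / n)) (g : ℕ × ℕ) := mem_Gs.mp g.2
  have hb : (g : ℕ × ℕ).2 < n := by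
    rcases hgood with ⟨h1, _⟩ | ⟨_, h2, _⟩
    · exact h1.trans_le (Nat.mod_lt _ hn).le
    · exact h2
  simp only [Function.comp_apply, v, L'_pi, L_mono_mk2]
  rw [show mk2 (g : ℕ × ℕ).1 (g : ℕ × ℕ).2 = mk2 (g:ℕ×ℕ).1 (g:ℕ×ℕ).2 from rfl,
    tgt_mk2_lt n q _ _ _ _ hb, if_pos]
  · exact hgood

lemma memI_X0 : (X 0 ^ q : MvPolynomial (Fin 2) k) ∈ I k n q :=
  Ideal.subset_span (by simp)

lemma memI_X1 : (X 1 ^ q : MvPolynomial (Fin 2) k) ∈ I k n q :=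
  Ideal.subset_span (by simp)

lemma memI_f : (X 0 ^ n - X 1 ^ n : MvPolynomial (Fin 2) k) ∈ I k n q :=
  Ideal.subset_span (by simp)

lemma memI_cnr : (X 0 ^ (n * (q / n)) * X 1 ^ (q % n) : MvPolynomial (Fin 2) k) ∈ I k n q := by
  obtain ⟨t, ht⟩ : (X 0 ^ n - X 1 ^ n : MvPolynomial (Fin 2) k) ∣
      (X 0 ^ (n * (q / n)) - X 1 ^ (n * (q / n))) := by
    rw [pow_mul, pow_mul]
    exact sub_dvd_pow_sub_pow _ _ _
  have hq : (X 1 ^ q : MvPolynomial (Fin 2) k) = X 1 ^ (n * (q / n)) * X 1 ^ (q % n) := by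
    rw [← pow_add, Nat.div_add_mod]
  have key : (X 0 ^ (n * (q / n)) * X 1 ^ (q % n) : MvPolynomial (Fin 2) k) =
      X 1 ^ q + ((X 0 ^ n - X 1 ^ n) * t) * X 1 ^ (q % n) := by
    rw [hq, ← ht]; ring
  rw [key]
  exact add_mem (memI_X1 k n q)
    (Ideal.mul_mem_right _ _ (Ideal.mul_mem_right _ _ (memI_f k n q)))

lemma pi_step (hn : 0 < n) (a b : ℕ) :
    pi k n q (monomial (mk2 a (b + n)) 1) = pi k n q (monomial (mk2 (a + n) b) 1) := by
  rw [pi, Ideal.Quotient.mkₐ_eq_mk, Ideal.Quotient.eq]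
  have : (monomial (mk2 a (b + n)) (1:k)) - monomial (mk2 (a + n) b) 1 =
      -((X 0 ^ a * X 1 ^ b) * (X 0 ^ n - X 1 ^ n)) := by
    rw [monomial_mk2, monomial_mk2, pow_add, pow_add]; ring
  rw [this]
  exact neg_mem (Ideal.mul_mem_left _ _ (memI_f k n q))

lemma span_claim (hn : 0 < n) : ∀ b a, pi k n q (monomial (mk2 a b) 1) ∈
    Submodule.span k (Set.range (v k n q)) := by
  intro b
  induction b using Nat.strong_induction_on with
  | _ b ih =>
    intro a
    rcases le_or_gt n b with h | h
    · obtain ⟨b', rfl⟩ : ∃ b', b = b' + n := ⟨b - n, by omega⟩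
      rw [pi_step k n q hn]
      exact ih b' (by omega) (a + n)
    · by_cases hg : good n q (q % n) (n * (q / n)) (a, b)
      · exact Submodule.subset_span ⟨⟨(a, b), mem_Gs.mpr hg⟩, rfl⟩
      · have hcases : q ≤ a ∨ (q % n ≤ b ∧ n * (q / n) ≤ a) := by
          simp only [good] at hg; omega
        have hmem : (monomial (mk2 a b) (1:k)) ∈ I k n q := by
          rcases hcases with hc | ⟨hc1, hc2⟩
          · have : (monomial (mk2 a b) (1:k)) =
                X 0 ^ q * (X 0 ^ (a - q) * X 1 ^ b) := by
              rw [monomial_mk2, ← mul_assoc, ← pow_add]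
              congr 2
              omega
            rw [this]
            exact Ideal.mul_mem_right _ _ (memI_X0 k n q)
          · have : (monomial (mk2 a b) (1:k)) =
                (X 0 ^ (n * (q / n)) * X 1 ^ (q % n)) *
                  (X 0 ^ (a - n * (q / n)) * X 1 ^ (b - q % n)) := by
              have e1 : (X 0 ^ (n * (q / n)) * X 1 ^ (q % n) : MvPolynomial (Fin 2) k) *
                  (X 0 ^ (a - n * (q / n)) * X 1 ^ (b - q % n)) =
                  X 0 ^ (n * (q / n) + (a - n * (q / n))) *
                    X 1 ^ (q % n + (b - q % n)) := by
                rw [pow_add, pow_add]; ring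
              rw [monomial_mk2, e1, show n * (q / n) + (a - n * (q / n)) = a by omega,
                show q % n + (b - q % n) = b by omega]
            rw [this]
            exact Ideal.mul_mem_right _ _ (memI_cnr k n q)
        have : pi k n q (monomial (mk2 a b) 1) = 0 := by
          rw [pi, Ideal.Quotient.mkₐ_eq_mk, Ideal.Quotient.eq_zero_iff_mem]
          exact hmem
        rw [this]
        exact zero_mem _

lemma span_v (hn : 0 < n) :
    ⊤ ≤ Submodule.span k (Set.range (v k n q)) := by
  rintro x -
  obtain ⟨z, rfl⟩ := Ideal.Quotient.mk_surjective x
  have hpi : ∀ w : MvPolynomial (Fin 2) k, Ideal.Quotient.mk (I k n q) w = pi k n q w :=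
    fun w => (Ideal.Quotient.mkₐ_eq_mk k (I k n q)) ▸ rfl
  rw [hpi]
  induction z using MvPolynomial.induction_on' with
  | monomial d c =>
    have h1 : monomial d c = c • monomial d (1 : k) := by
      rw [smul_monomial, smul_eq_mul, mul_one]
    rw [h1, map_smul]
    apply Submodule.smul_mem
    rw [eq_mk2 d]
    exact span_claim k n q hn (d 1) (d 0)
  | add p p' hp hp' =>
    rw [map_add]
    exact add_mem hp hp'

noncomputable def bQ (hn : 0 < n) : Module.Basis (Gs n q) k (Q k n q) :=
  Module.Basis.mk (v_indep k n q hn) (span_v k n q hn)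

lemma finrank_Q (hn : 0 < n) :
    Module.finrank k (Q k n q) = q * (q % n) + n * (q / n) * (n - q % n) := by
  rw [Module.finrank_eq_card_basis (bQ k n q hn), Fintype.card_coe, card_Gs]

end quot

theorem dim_eq {k : Type*} [Field k] (n q : ℕ) (hn : 0 < n) :
    Module.finrank k (MvPolynomial (Fin 2) k ⧸
      Ideal.span {(X 0 : MvPolynomial (Fin 2) k) ^ q, X 1 ^ q, X 0 ^ n - X 1 ^ n})
      = q * (q % n) + n * (q / n) * (n - q % n) :=
  finrank_Q k n q hn

end HKaux

/-- Theorem 1(2), first half: the periodic term `φ` of the Hilbert--Kunz function of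
`k[[x,y]]/(x^n - y^n)` satisfies `φ(e + ω) = φ(e)` for all `e`, where `ω` is the
multiplicative order of `p` modulo `n`. -/
theorem stmt2 {k : Type*} [Field k] (p : ℕ) (hp : p.Prime) [CharP k p]
    (n : ℕ) (hn : 1 < n) (hpn : ¬ p ∣ n)
    (φ : ℕ → ℤ)
    (hφ : ∀ e : ℕ, φ e = (n : ℤ) * (p : ℤ) ^ e -
      (Module.finrank k (MvPolynomial (Fin 2) k ⧸
        Ideal.span {(X 0 : MvPolynomial (Fin 2) k) ^ p ^ e, X 1 ^ p ^ e,
          X 0 ^ n - X 1 ^ n}) : ℤ))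
    (ω : ℕ) (hω : ω = orderOf ((p : ZMod n))) :
    ∀ e : ℕ, φ (e + ω) = φ e := by
  have hn0 : 0 < n := by omega
  -- closed form for φ
  have key : ∀ e : ℕ, φ e = ((p ^ e % n : ℕ) : ℤ) * ((n : ℤ) - ((p ^ e % n : ℕ) : ℤ)) := by
    intro e
    rw [hφ e, HKaux.dim_eq n (p ^ e) hn0]
    set c := p ^ e / n with hc
    set r := p ^ e % n with hr
    have h1 : n * c + r = p ^ e := Nat.div_add_mod _ n
    have h2 : r ≤ n := (Nat.mod_lt _ hn0).le
    have hP : ((p : ℤ)) ^ e = ((n * c + r : ℕ) : ℤ) := by exact_mod_cast (congrArg (Nat.cast : ℕ → ℤ) h1).symm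
    have hP2 : (p : ℕ) ^ e = n * c + r := h1.symm
    rw [hP, hP2]
    push_cast [h2]
    ring
  -- periodicity of the residue
  have hmod : ∀ e : ℕ, p ^ (e + ω) % n = p ^ e % n := by
    intro e
    have h1 : ((p : ZMod n)) ^ ω = 1 := by rw [hω]; exact pow_orderOf_eq_one _
    have h2 : ((p ^ ω : ℕ) : ZMod n) = ((1 : ℕ) : ZMod n) := by push_cast; simpa using h1
    have h3 : p ^ ω ≡ 1 [MOD n] := (ZMod.natCast_eq_natCast_iff _ _ _).mp h2
    have h4 : p ^ e * p ^ ω ≡ p ^ e * 1 [MOD n] := h3.mul_left _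
    rw [mul_one] at h4
    rw [pow_add]
    exact h4
  intro e
  rw [key (e + ω), key e, hmod e]
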